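/- Let g ∈ L_∞([0,∞)) and define γ_g(n) = (1/n!) ∫₀^∞ g(√r)·e^{-r}·r^n dr for n ∈ ℕ. If there exists p ∈ ℕ such that γ_g(n) = 0 for all n ≥ p, then g = 0 almost everywhere on [0,∞). -/

import Mathlib

open MeasureTheory Set Real Filter SchwartzMap
open scoped FourierTransform Topology ContDiff RealInnerProductSpace

noncomputable def rtHelperToSchwartz (φ : ℝ → ℝ) (hs : ContDiff ℝ ∞ φ)
    (hc : HasCompactSupport φ) : SchwartzMap ℝ ℂ where
  toFun := fun x => (φ x : ℂ)
  smooth' := Complex.ofRealCLM.contDiff.comp hs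
  decay' := by
    intro k n
    have hcomp : (fun x => (φ x : ℂ)) = Complex.ofRealLI ∘ φ := rfl
    have hnorm : ∀ x, ‖iteratedFDeriv ℝ n (fun x => (φ x : ℂ)) x‖ = ‖iteratedFDeriv ℝ n φ x‖ := by
      intro x
      rw [hcomp, Complex.ofRealLI.norm_iteratedFDeriv_comp_left hs.contDiffAt (by exact_mod_cast le_top)]
    have hsupp : HasCompactSupport (fun x => ‖x‖^k * ‖iteratedFDeriv ℝ n φ x‖) := by
      apply HasCompactSupport.mul_left
      exact (hc.iteratedFDeriv n).norm
    have hcont : Continuous (fun x : ℝ => ‖x‖^k * ‖iteratedFDeriv ℝ n φ x‖) := by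
      apply Continuous.mul (by fun_prop)
      exact ((hs.continuous_iteratedFDeriv (by exact_mod_cast le_top))).norm
    obtain ⟨C, hC⟩ := hsupp.exists_bound_of_continuous hcont
    refine ⟨C, fun x => by rw [hnorm]; exact le_trans (le_abs_self _) ((Real.norm_eq_abs _) ▸ hC x)⟩

lemma rtHelperToSchwartz_apply (φ : ℝ → ℝ) (hs : ContDiff ℝ ∞ φ) (hc : HasCompactSupport φ)
    (x : ℝ) : rtHelperToSchwartz φ hs hc x = (φ x : ℂ) := rfl

section core
variable (c : ℝ → ℂ) (M' : ℝ) (p : ℕ)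

noncomputable def rtFF : ℝ → ℂ := (Set.Ioi (0:ℝ)).indicator c

noncomputable def rtFn (n : ℕ) (z : ℂ) : ℂ :=
  ∫ r : ℝ, rtFF c r * (r:ℂ)^n * Complex.exp (z * r)

noncomputable def rtMaj (b : ℝ) (n : ℕ) : ℝ → ℝ :=
  (Set.Ioi (0:ℝ)).indicator (fun s => M' * (s^(p+n) * Real.exp ((b-1)*s)))

lemma rtMaj_integrable {b : ℝ} (hb : b < 1) (n : ℕ) : Integrable (rtMaj M' p b n) := by
  unfold rtMaj
  rw [integrable_indicator_iff measurableSet_Ioi]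
  have h := integrableOn_rpow_mul_exp_neg_mul_rpow (s := ((p+n:ℕ):ℝ)) (p := 1)
    (lt_of_lt_of_le neg_one_lt_zero (Nat.cast_nonneg _)) zero_lt_one (b := 1 - b) (by linarith)
  have h2 : IntegrableOn (fun x => M' * (x ^ ((p+n:ℕ):ℝ) * Real.exp (-(1-b) * x ^ (1:ℝ))))
      (Set.Ioi 0) := h.const_mul M'
  apply h2.congr_fun ?_ measurableSet_Ioi
  intro x hx
  simp only [Real.rpow_one, Real.rpow_natCast]
  ring_nf

variable {c M' p}

lemma rtMeas_aux (hc : Measurable c) (n : ℕ) (z : ℂ) :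
    AEStronglyMeasurable (fun r : ℝ => rtFF c r * (r:ℂ)^n * Complex.exp (z * r)) volume := by
  apply Measurable.aestronglyMeasurable
  exact ((hc.indicator measurableSet_Ioi).mul ((Complex.measurable_ofReal).pow_const n)).mul
    (Complex.measurable_exp.comp (Complex.measurable_ofReal.const_mul z))

lemma rtBound_aux (hM' : 0 ≤ M')
    (hb : ∀ᵐ r : ℝ, r ∈ Set.Ioi (0:ℝ) → ‖c r‖ ≤ M' * Real.exp (-r) * r ^ p)
    {b : ℝ} (n : ℕ) :
    ∀ᵐ r : ℝ, ∀ z : ℂ, z.re ≤ b →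
      ‖rtFF c r * (r:ℂ)^n * Complex.exp (z * r)‖ ≤ rtMaj M' p b n r := by
  filter_upwards [hb] with r hr z hz
  unfold rtFF rtMaj
  by_cases h : r ∈ Set.Ioi (0:ℝ)
  · have hr0 : (0:ℝ) < r := h
    rw [Set.indicator_of_mem h, Set.indicator_of_mem h]
    have hnorm : ‖c r * (r:ℂ)^n * Complex.exp (z * r)‖
        = ‖c r‖ * (r^n * Real.exp (z.re * r)) := by
      rw [norm_mul, norm_mul, norm_pow, Complex.norm_real, Real.norm_of_nonneg hr0.le,
        show ‖Complex.exp (z*(r:ℂ))‖ = Real.exp ((z*(r:ℂ)).re) from by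
          rw [Complex.norm_exp],
        show (z * (r:ℂ)).re = z.re * r from by simp [Complex.mul_re]]
      ring
    rw [hnorm]
    have h1 : ‖c r‖ * (r^n * Real.exp (z.re * r))
        ≤ (M' * Real.exp (-r) * r ^ p) * (r^n * Real.exp (z.re * r)) := by
      apply mul_le_mul_of_nonneg_right (hr h) (by positivity)
    refine h1.trans ?_
    have heq : (M' * Real.exp (-r) * r ^ p) * (r^n * Real.exp (z.re * r))
        = M' * (r^(p+n) * Real.exp (z.re * r - r)) := by
      rw [pow_add, show Real.exp (z.re*r - r) = Real.exp (-r) * Real.exp (z.re*r) by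
        rw [← Real.exp_add]; ring_nf]
      ring
    rw [heq]
    have : Real.exp (z.re * r - r) ≤ Real.exp ((b-1)*r) :=
      Real.exp_le_exp.2 (by nlinarith)
    have hrp : (0:ℝ) ≤ r^(p+n) := by positivity
    nlinarith [mul_le_mul_of_nonneg_left this hrp]
  · rw [Set.indicator_of_notMem h, Set.indicator_of_notMem h]
    simp

lemma rtIntegrable_aux (hc : Measurable c) (hM' : 0 ≤ M')
    (hb : ∀ᵐ r : ℝ, r ∈ Set.Ioi (0:ℝ) → ‖c r‖ ≤ M' * Real.exp (-r) * r ^ p)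
    (n : ℕ) {z : ℂ} (hz : z.re < 1) :
    Integrable (fun r : ℝ => rtFF c r * (r:ℂ)^n * Complex.exp (z * r)) := by
  apply Integrable.mono' (rtMaj_integrable M' p hz n) (rtMeas_aux hc n z)
  filter_upwards [rtBound_aux hM' hb n (b := z.re)] with r h
  exact h z le_rfl

lemma rtHasDerivAt_Fn (hc : Measurable c) (hM' : 0 ≤ M')
    (hb : ∀ᵐ r : ℝ, r ∈ Set.Ioi (0:ℝ) → ‖c r‖ ≤ M' * Real.exp (-r) * r ^ p)
    (n : ℕ) {z₀ : ℂ} (hz : z₀.re < 1/2) :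
    HasDerivAt (rtFn c n) (rtFn c (n+1) z₀) z₀ := by
  set ε : ℝ := (1/2 - z₀.re)/2 with hε
  have hε0 : 0 < ε := by simp only [hε]; linarith
  have hball : ∀ z ∈ Metric.ball z₀ ε, z.re ≤ z₀.re + ε := by
    intro z hz'
    have : |(z - z₀).re| ≤ ‖z - z₀‖ := Complex.abs_re_le_norm _
    rw [Complex.sub_re] at this
    have h2 : ‖z - z₀‖ < ε := by rwa [Metric.mem_ball, dist_eq_norm] at hz'
    have h5 := (abs_le.1 (this.trans h2.le)).2
    linarith
  have hblt : z₀.re + ε < 1 := by simp only [hε]; linarith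
  have key := hasDerivAt_integral_of_dominated_loc_of_deriv_le (μ := volume)
    (F := fun z r => rtFF c r * (r:ℂ)^n * Complex.exp (z * r))
    (F' := fun z r => rtFF c r * (r:ℂ)^(n+1) * Complex.exp (z * r))
    (x₀ := z₀) (bound := rtMaj M' p (z₀.re + ε) (n+1)) (Metric.ball_mem_nhds z₀ hε0)
    (Filter.Eventually.of_forall fun z => rtMeas_aux hc n z)
    (rtIntegrable_aux hc hM' hb n (by linarith))
    (rtMeas_aux hc (n+1) z₀)
    ?_ (rtMaj_integrable M' p hblt (n+1)) ?_
  · exact key.2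
  · filter_upwards [rtBound_aux hM' hb (b := z₀.re + ε) (n+1)] with r h z hz'
    exact h z (hball z hz')
  · filter_upwards with r z hz'
    have h1 : HasDerivAt (fun z : ℂ => Complex.exp (z * r)) (Complex.exp (z * r) * r) z := by
      simpa using ((hasDerivAt_id z).mul_const (r:ℂ)).cexp
    have h2 := h1.const_mul (rtFF c r * (r:ℂ)^n)
    exact h2.congr_deriv (by rw [pow_succ]; ring)

lemma rtIteratedDeriv_Fn (hc : Measurable c) (hM' : 0 ≤ M')
    (hb : ∀ᵐ r : ℝ, r ∈ Set.Ioi (0:ℝ) → ‖c r‖ ≤ M' * Real.exp (-r) * r ^ p)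
    (n : ℕ) : ∀ z : ℂ, z.re < 1/2 → iteratedDeriv n (rtFn c 0) z = rtFn c n z := by
  induction n with
  | zero => intro z hz; simp [iteratedDeriv_zero]
  | succ n ih =>
    intro z hz
    rw [iteratedDeriv_succ]
    have hop : IsOpen {w : ℂ | w.re < 1/2} := isOpen_lt Complex.continuous_re continuous_const
    have hev : iteratedDeriv n (rtFn c 0) =ᶠ[𝓝 z] rtFn c n := by
      filter_upwards [hop.mem_nhds hz] with w hw using ih w hw
    rw [hev.deriv_eq]
    exact (rtHasDerivAt_Fn hc hM' hb n hz).deriv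

lemma rtFn_zero (hmom : ∀ n : ℕ, ∫ r in Set.Ioi (0:ℝ), c r * (r:ℂ)^n = 0) (n : ℕ) :
    rtFn c n 0 = 0 := by
  unfold rtFn
  have h1 : (fun r : ℝ => rtFF c r * (r:ℂ)^n * Complex.exp (0 * r))
      = (Set.Ioi (0:ℝ)).indicator (fun r => c r * (r:ℂ)^n) := by
    funext r
    unfold rtFF
    by_cases h : r ∈ Set.Ioi (0:ℝ)
    · rw [Set.indicator_of_mem h, Set.indicator_of_mem h]; simp
    · rw [Set.indicator_of_notMem h, Set.indicator_of_notMem h]; simp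
  rw [h1, integral_indicator measurableSet_Ioi]
  exact hmom n

lemma rtFn_vanish (hc : Measurable c) (hM' : 0 ≤ M')
    (hb : ∀ᵐ r : ℝ, r ∈ Set.Ioi (0:ℝ) → ‖c r‖ ≤ M' * Real.exp (-r) * r ^ p)
    (hmom : ∀ n : ℕ, ∫ r in Set.Ioi (0:ℝ), c r * (r:ℂ)^n = 0) :
    ∀ z : ℂ, z.re < 1/2 → rtFn c 0 z = 0 := by
  set U : Set ℂ := {w : ℂ | w.re < 1/2} with hUdef
  have hop : IsOpen U := isOpen_lt Complex.continuous_re continuous_const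
  have hpre : IsPreconnected U := (convex_halfSpace_re_lt _).isPreconnected
  have h0U : (0:ℂ) ∈ U := by simp [hUdef]
  have hdiff : DifferentiableOn ℂ (rtFn c 0) U := fun z hz =>
    (rtHasDerivAt_Fn hc hM' hb 0 hz).differentiableAt.differentiableWithinAt
  have hana : AnalyticOnNhd ℂ (rtFn c 0) U := hdiff.analyticOnNhd hop
  obtain ⟨q, hq⟩ := hana 0 h0U
  obtain ⟨ρ, hρ⟩ := hq
  have hball : ∀ y ∈ EMetric.ball (0:ℂ) ρ, rtFn c 0 y = 0 := by
    intro y hy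
    have hs := hρ.hasSum_iteratedFDeriv hy
    have h2 : ∀ m : ℕ, iteratedFDeriv ℂ m (rtFn c 0) 0 (fun _ => y) = 0 := by
      intro m
      calc iteratedFDeriv ℂ m (rtFn c 0) 0 (fun _ => y)
          = iteratedFDeriv ℂ m (rtFn c 0) 0 (fun _ => y • (1:ℂ)) := by simp
        _ = (∏ _i : Fin m, y) • iteratedFDeriv ℂ m (rtFn c 0) 0 (fun _ => (1:ℂ)) :=
            (iteratedFDeriv ℂ m (rtFn c 0) 0).map_smul_univ _ _
        _ = 0 := by
            rw [← iteratedDeriv_eq_iteratedFDeriv,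
              rtIteratedDeriv_Fn hc hM' hb m 0 (by norm_num), rtFn_zero hmom m]
            simp
    simp only [h2, smul_zero] at hs
    have := hs.unique hasSum_zero
    rwa [zero_add] at this
  have hev : rtFn c 0 =ᶠ[𝓝 (0:ℂ)] 0 :=
    Filter.eventually_of_mem (EMetric.ball_mem_nhds _ hρ.r_pos) hball
  have := hana.eqOn_zero_of_preconnected_of_eventuallyEq_zero hpre h0U hev
  exact fun z hz => this hz

lemma rtFourier_vanish (hc : Measurable c) (hM' : 0 ≤ M')
    (hb : ∀ᵐ r : ℝ, r ∈ Set.Ioi (0:ℝ) → ‖c r‖ ≤ M' * Real.exp (-r) * r ^ p)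
    (hmom : ∀ n : ℕ, ∫ r in Set.Ioi (0:ℝ), c r * (r:ℂ)^n = 0) (ξ : ℝ) :
    𝓕 (rtFF c) ξ = 0 := by
  have h1 : 𝓕 (rtFF c) ξ = rtFn c 0 (((-2) * Real.pi * ξ : ℝ) * Complex.I) := by
    rw [Real.fourier_real_eq_integral_exp_smul]
    unfold rtFn
    apply integral_congr_ae
    filter_upwards with v
    rw [smul_eq_mul, pow_zero, mul_one, mul_comm]
    congr 1
    push_cast
    ring_nf
  rw [h1]
  apply rtFn_vanish hc hM' hb hmom
  simp

lemma rtFF_ae_zero (hc : Measurable c) (hM' : 0 ≤ M')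
    (hb : ∀ᵐ r : ℝ, r ∈ Set.Ioi (0:ℝ) → ‖c r‖ ≤ M' * Real.exp (-r) * r ^ p)
    (hmom : ∀ n : ℕ, ∫ r in Set.Ioi (0:ℝ), c r * (r:ℂ)^n = 0) :
    ∀ᵐ r : ℝ, rtFF c r = 0 := by
  have hint : Integrable (rtFF c) := by
    have := rtIntegrable_aux hc hM' hb 0 (z := 0) (by norm_num)
    apply this.congr
    filter_upwards with r
    simp
  apply ae_eq_zero_of_integral_contDiff_smul_eq_zero hint.locallyIntegrable
  intro φ hφ hsupp
  set Φ := rtHelperToSchwartz φ hφ hsupp with hΦ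
  have hΦap : ∀ x, Φ x = (φ x : ℂ) := fun x => rfl
  have step1 : ∫ x : ℝ, φ x • rtFF c x = ∫ x : ℝ, Φ x * rtFF c x :=
    integral_congr_ae (Filter.Eventually.of_forall fun x => by
      simp only [hΦap, Complex.real_smul])
  rw [step1]
  set ψ := (fourierTransformCLE ℂ 𝓢(ℝ, ℂ)).symm Φ with hψ
  have hΦψ : ∀ x, Φ x = 𝓕 (⇑ψ) x := by
    intro x
    have : fourierTransformCLE ℂ 𝓢(ℝ, ℂ) ψ = Φ := (fourierTransformCLE ℂ 𝓢(ℝ, ℂ)).apply_symm_apply Φ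
    rw [← this]; rfl
  have hflip : (innerₗ ℝ).flip = innerₗ ℝ := by
    apply LinearMap.ext; intro x; apply LinearMap.ext; intro y
    simp [real_inner_comm]
  calc ∫ x : ℝ, Φ x * rtFF c x = ∫ x : ℝ, (𝓕 (⇑ψ) x) • rtFF c x := by
        simp_rw [← hΦψ, smul_eq_mul]
    _ = ∫ x : ℝ, (⇑ψ x) • (VectorFourier.fourierIntegral Real.fourierChar volume
          (innerₗ ℝ).flip (rtFF c) x) := by
        exact VectorFourier.integral_fourierIntegral_smul_eq_flip Real.continuous_fourierChar
          continuous_inner ψ.integrable hint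
    _ = 0 := by
        rw [hflip]
        have hF : ∀ x : ℝ, (VectorFourier.fourierIntegral Real.fourierChar volume
            (innerₗ ℝ) (rtFF c) x) = 0 := fun x => rtFourier_vanish hc hM' hb hmom x
        simp [hF]

end core

theorem radial_toeplitz_eigenvalues_eventually_zero_implies_symbol_zero
    (g : ℝ → ℂ) (hg : Measurable g) (M : ℝ)
    (hbdd : ∀ᵐ x ∂(volume.restrict (Set.Ici (0 : ℝ))), ‖g x‖ ≤ M)
    (p : ℕ)
    (hzero : ∀ n : ℕ, p ≤ n →
      (1 / (Nat.factorial n : ℂ)) *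
        ∫ r in Set.Ioi (0 : ℝ), g (Real.sqrt r) * Real.exp (-r) * (r : ℂ) ^ n = 0) :
    ∀ᵐ x ∂(volume.restrict (Set.Ici (0 : ℝ))), g x = 0 := by
  classical
  set M' : ℝ := max M 0 with hM'def
  set c : ℝ → ℂ := fun r => g (Real.sqrt r) * (Real.exp (-r) : ℂ) * (r:ℂ)^p with hcdef
  have hcm : Measurable c := by
    apply Measurable.mul
    · apply Measurable.mul (hg.comp Real.continuous_sqrt.measurable)
      exact Complex.measurable_ofReal.comp (Real.measurable_exp.comp measurable_neg)
    · exact (Complex.measurable_ofReal).pow_const p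
  -- the bad set for the bound on g is null
  have hNull : volume {x : ℝ | x ∈ Set.Ici (0:ℝ) ∧ ¬ ‖g x‖ ≤ M} = 0 := by
    have h1 := (ae_restrict_iff' measurableSet_Ici).mp hbdd
    rw [ae_iff] at h1
    convert h1 using 2
    ext x
    simp only [Set.mem_setOf_eq, Classical.not_imp]
  have himg : volume ((fun x : ℝ => x^2) ''
      {x : ℝ | x ∈ Set.Ici (0:ℝ) ∧ ¬ ‖g x‖ ≤ M}) = 0 :=
    addHaar_image_eq_zero_of_differentiableOn_of_addHaar_eq_zero (μ := volume)
      ((differentiable_pow 2).differentiableOn) hNull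
  -- a.e. exponential bound for c on Ioi 0
  have hb : ∀ᵐ r : ℝ, r ∈ Set.Ioi (0:ℝ) → ‖c r‖ ≤ M' * Real.exp (-r) * r ^ p := by
    rw [ae_iff]
    apply measure_mono_null ?_ himg
    intro r hr
    simp only [Set.mem_setOf_eq, Classical.not_imp] at hr
    obtain ⟨hr0, hrle⟩ := hr
    have hr0' : (0:ℝ) < r := hr0
    refine ⟨Real.sqrt r, ⟨Real.sqrt_nonneg r, ?_⟩, Real.sq_sqrt hr0'.le⟩
    intro habs
    apply hrle
    have hnorm : ‖c r‖ = ‖g (Real.sqrt r)‖ * Real.exp (-r) * r ^ p := by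
      rw [hcdef]
      simp only [norm_mul, norm_pow, Complex.norm_real]
      rw [Real.norm_eq_abs, Real.norm_eq_abs, abs_of_nonneg (Real.exp_pos _).le,
        abs_of_nonneg hr0'.le]
    rw [hnorm]
    have hM : ‖g (Real.sqrt r)‖ ≤ M' := habs.trans (le_max_left M 0)
    have : (0:ℝ) ≤ Real.exp (-r) * r ^ p := by positivity
    calc ‖g (Real.sqrt r)‖ * Real.exp (-r) * r ^ p
        = ‖g (Real.sqrt r)‖ * (Real.exp (-r) * r ^ p) := by ring
      _ ≤ M' * (Real.exp (-r) * r ^ p) := mul_le_mul_of_nonneg_right hM this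
      _ = M' * Real.exp (-r) * r ^ p := by ring
  -- moments vanish
  have hmom : ∀ n : ℕ, ∫ r in Set.Ioi (0:ℝ), c r * (r:ℂ)^n = 0 := by
    intro n
    have h := hzero (p+n) (Nat.le_add_right p n)
    have h2 : ∫ r in Set.Ioi (0:ℝ), g (Real.sqrt r) * Real.exp (-r) * (r:ℂ)^(p+n) = 0 := by
      rcases mul_eq_zero.mp h with h' | h'
      · exact absurd h' (by
          simp only [one_div, ne_eq, inv_eq_zero, Nat.cast_eq_zero]
          exact Nat.factorial_ne_zero _)
      · exact h'
    rw [← h2]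
    apply integral_congr_ae
    filter_upwards with r
    rw [hcdef]
    simp only
    rw [pow_add]
    ring
  -- apply the core result
  have hff := rtFF_ae_zero hcm (le_max_right M 0) hb hmom
  have hA : volume {r : ℝ | ¬ rtFF c r = 0} = 0 := ae_iff.mp hff
  have hB : volume {r : ℝ | 0 < r ∧ g (Real.sqrt r) ≠ 0} = 0 := by
    apply measure_mono_null ?_ hA
    intro r hr
    obtain ⟨hr0, hgr⟩ := hr
    simp only [Set.mem_setOf_eq]
    unfold rtFF
    rw [Set.indicator_of_mem (by exact hr0 : r ∈ Set.Ioi (0:ℝ))]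
    rw [hcdef]
    exact mul_ne_zero (mul_ne_zero hgr (Complex.ofReal_ne_zero.mpr (Real.exp_ne_zero _)))
      (pow_ne_zero _ (Complex.ofReal_ne_zero.mpr hr0.ne'))
  have hsimg : volume (Real.sqrt '' {r : ℝ | 0 < r ∧ g (Real.sqrt r) ≠ 0}) = 0 := by
    apply addHaar_image_eq_zero_of_differentiableOn_of_addHaar_eq_zero (μ := volume) ?_ hB
    intro r hr
    exact (Real.hasDerivAt_sqrt hr.1.ne').differentiableAt.differentiableWithinAt
  rw [ae_restrict_iff' measurableSet_Ici, ae_iff]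
  apply measure_mono_null ?_
    (measure_union_null (measure_singleton (0:ℝ))
      hsimg)
  intro x hx
  simp only [Set.mem_setOf_eq, Classical.not_imp] at hx
  obtain ⟨hx0, hgx⟩ := hx
  rcases eq_or_lt_of_le (Set.mem_Ici.mp hx0) with heq | hlt
  · exact Or.inl (by simp [← heq])
  · refine Or.inr ⟨x^2, ⟨by positivity, ?_⟩, Real.sqrt_sq hlt.le⟩
    rwa [Real.sqrt_sq hlt.le]
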